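/- Let X be a Banach space and let (A_m)_{m∈ℤ} be a sequence of bounded linear operators on X admitting an exponential trichotomy with constants C, λ > 0. Let f_n : X → X (n ∈ ℤ) satisfy ‖f_n(x) − f_n(y)‖ ≤ c‖x − y‖ for all n, x, y, where 0 < c < (1−e^{−λ})/(2C(1+e^{−λ})); set F_n = A_n + f_n. Then the system x_{n+1} = F_n(x_n) has the ℓ^∞-Lipschitz shadowing property: there exists K > 0 such that for every ε > 0 and every sequence (y_n)_{n∈ℤ} ⊂ X with sup_{n∈ℤ} ‖y_{n+1} − F_n(y_n)‖ ≤ ε/K, there exists a sequence (x_n)_{n∈ℤ} with x_{n+1} = F_n(x_n) for all n ∈ ℤ and sup_{n∈ℤ} ‖x_n − y_n‖ ≤ ε. -/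

import Mathlib

open scoped ENNReal

/-- The forward products `𝒜(m,n) = A_{m-1} ⋯ A_n` (equal to the identity when `m ≤ n`). -/
noncomputable def calA {X : Type*} [NormedAddCommGroup X] [NormedSpace ℝ X]
    (A : ℤ → X →L[ℝ] X) (m n : ℤ) : X →L[ℝ] X :=
  (List.range (m - n).toNat).foldl (fun B k => (A (n + (k : ℤ))).comp B)
    (ContinuousLinearMap.id ℝ X)

/-- The sequence `(A_m)_{m ∈ ℤ}` admits an exponential trichotomy with constants `C, lam > 0`.
The projections are `P 0 = P¹` (stable), `P 1 = P²` (unstable) and `P 2 = P³` (central).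
For `m ≤ n`, the operator `𝒜(m,n)` (the inverse of `𝒜(n,m)` restricted to `Ker P¹_m`)
is described implicitly: `w = 𝒜(m,n) P^i_n x` iff `w ∈ Ker P¹_m` and `𝒜(n,m) w = P^i_n x`. -/
def ExpTrichotomy {X : Type*} [NormedAddCommGroup X] [NormedSpace ℝ X]
    (A : ℤ → X →L[ℝ] X) (C lam : ℝ) : Prop :=
  ∃ P : Fin 3 → ℤ → X →L[ℝ] X,
    (∀ m, P 0 m + P 1 m + P 2 m = ContinuousLinearMap.id ℝ X) ∧
    (∀ i m, (P i m).comp (P i m) = P i m) ∧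
    (∀ i j m, i ≠ j → (P i m).comp (P j m) = 0) ∧
    (∀ i m, (P i (m + 1)).comp (A m) = (A m).comp (P i m)) ∧
    (∀ m, Set.BijOn (A m) (LinearMap.ker (P 0 m : X →ₗ[ℝ] X) : Set X)
      (LinearMap.ker (P 0 (m + 1) : X →ₗ[ℝ] X) : Set X)) ∧
    (∀ m n : ℤ, n ≤ m → ‖(calA A m n).comp (P 0 n)‖ ≤ C * Real.exp (-lam * (m - n))) ∧
    (∀ m n : ℤ, m ≤ n → ∀ x w : X, w ∈ LinearMap.ker (P 0 m : X →ₗ[ℝ] X) →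
      calA A n m w = P 1 n x → ‖w‖ ≤ C * Real.exp (-lam * (n - m)) * ‖x‖) ∧
    (∀ m n : ℤ, n ≤ m → ‖(calA A m n).comp (P 2 n)‖ ≤ C * Real.exp (-lam * (m - n))) ∧
    (∀ m n : ℤ, m ≤ n → ∀ x w : X, w ∈ LinearMap.ker (P 0 m : X →ₗ[ℝ] X) →
      calA A n m w = P 2 n x → ‖w‖ ≤ C * Real.exp (-lam * (n - m)) * ‖x‖)

open scoped NNReal BoundedContinuousFunction

section aux
variable {X : Type*} [NormedAddCommGroup X] [NormedSpace ℝ X]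

lemma calA_self (A : ℤ → X →L[ℝ] X) (n : ℤ) : calA A n n = ContinuousLinearMap.id ℝ X := by
  unfold calA; simp

lemma calA_succ (A : ℤ → X →L[ℝ] X) {m n : ℤ} (h : m ≤ n) :
    calA A (n + 1) m = (A n).comp (calA A n m) := by
  unfold calA
  have h1 : (n + 1 - m).toNat = (n - m).toNat + 1 := by omega
  have h2 : m + (((n - m).toNat : ℕ) : ℤ) = n := by omega
  rw [h1, List.range_succ]
  simp only [List.map_append, List.map_cons, List.map_nil, List.foldl_append,
    List.foldl_cons, List.foldl_nil, List.bind_eq_flatMap, List.flatMap_append,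
    List.flatMap_cons, List.flatMap_nil, List.append_nil, List.pure_def, h2]

lemma calA_one (A : ℤ → X →L[ℝ] X) (m : ℤ) : calA A (m + 1) m = A m := by
  rw [calA_succ A le_rfl, calA_self, ContinuousLinearMap.comp_id]

lemma calA_comp (A : ℤ → X →L[ℝ] X) {n m : ℤ} (hnm : n ≤ m) :
    ∀ p : ℤ, m ≤ p → calA A p n = (calA A p m).comp (calA A m n) := by
  refine Int.le_induction ?_ ?_
  · rw [calA_self, ContinuousLinearMap.id_comp]
  · intro p hp ih
    rw [calA_succ A (hnm.trans hp), calA_succ A hp, ih, ContinuousLinearMap.comp_assoc]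

end aux

set_option maxHeartbeats 1000000 in
/-- Theorem 3.3 (Theorem `cor: uniqueness`): if `(A_m)_{m∈ℤ}` admits an exponential trichotomy
with constants `C, lam > 0` and the `f_n` are `c`-Lipschitz with
`0 < c < (1-e^{-lam})/(2C(1+e^{-lam}))`, then the system `x_{n+1} = A_n x_n + f_n(x_n)` has
the `ℓ^∞`-Lipschitz shadowing property. -/
theorem trichotomy_lipschitz_shadowing
    {X : Type*} [NormedAddCommGroup X] [NormedSpace ℝ X] [CompleteSpace X]
    (A : ℤ → X →L[ℝ] X) (C lam : ℝ) (hC : 0 < C) (hlam : 0 < lam)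
    (h : ExpTrichotomy A C lam)
    (f : ℤ → X → X) (c : ℝ) (hc : 0 < c)
    (hcsmall : c < (1 - Real.exp (-lam)) / (2 * C * (1 + Real.exp (-lam))))
    (hf : ∀ n : ℤ, ∀ x y : X, ‖f n x - f n y‖ ≤ c * ‖x - y‖) :
    ∃ K : ℝ, 0 < K ∧ ∀ ε : ℝ, 0 < ε → ∀ y : ℤ → X,
      (∀ n : ℤ, ‖y (n + 1) - (A n (y n) + f n (y n))‖ ≤ ε / K) →
      ∃ x : ℤ → X, (∀ n : ℤ, x (n + 1) = A n (x n) + f n (x n)) ∧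
        ∀ n : ℤ, ‖x n - y n‖ ≤ ε := by
  classical
  obtain ⟨P, h1, h2, h3, h4, h5, h6, h7, h8, h9⟩ := h
  -- basic constants
  set q : ℝ := Real.exp (-lam) with hqdef
  have hq0 : 0 < q := Real.exp_pos _
  have hq1 : q < 1 := Real.exp_lt_one_iff.mpr (by linarith)
  have h1q : 0 < 1 - q := by linarith
  -- commutation of projections with calA
  have hPcal : ∀ (i : Fin 3) (m n : ℤ), m ≤ n →
      (P i n).comp (calA A n m) = (calA A n m).comp (P i m) := by
    intro i m
    refine Int.le_induction ?_ ?_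
    · simp [calA_self]
    · intro n hn ih
      rw [calA_succ A hn, ← ContinuousLinearMap.comp_assoc, h4,
        ContinuousLinearMap.comp_assoc, ih, ← ContinuousLinearMap.comp_assoc]
  have hPcal' : ∀ (i : Fin 3) (m n : ℤ), m ≤ n → ∀ x : X,
      P i n (calA A n m x) = calA A n m (P i m x) := by
    intro i m n hmn x
    simpa using ContinuousLinearMap.ext_iff.mp (hPcal i m n hmn) x
  have hker : ∀ (m n : ℤ), m ≤ n → ∀ w : X, P 0 m w = 0 → P 0 n (calA A n m w) = 0 := by
    intro m n hmn w hw
    rw [hPcal' 0 m n hmn w, hw, map_zero]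
  -- injectivity of calA on the kernels
  have hinj : ∀ (m n : ℤ), m ≤ n → ∀ w w' : X, P 0 m w = 0 → P 0 m w' = 0 →
      calA A n m w = calA A n m w' → w = w' := by
    intro m
    refine Int.le_induction ?_ ?_
    · intro w w' _ _ hww
      simpa [calA_self] using hww
    · intro n hn ih w w' hw hw' hww
      refine ih w w' hw hw' ?_
      have hmem : calA A n m w ∈ (LinearMap.ker (P 0 n : X →ₗ[ℝ] X) : Set X) := by
        simpa [LinearMap.mem_ker] using hker m n hn w hw
      have hmem' : calA A n m w' ∈ (LinearMap.ker (P 0 n : X →ₗ[ℝ] X) : Set X) := by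
        simpa [LinearMap.mem_ker] using hker m n hn w' hw'
      refine (h5 n).injOn hmem hmem' ?_
      have e1 : calA A (n + 1) m w = A n (calA A n m w) := by
        rw [calA_succ A hn]; rfl
      have e2 : calA A (n + 1) m w' = A n (calA A n m w') := by
        rw [calA_succ A hn]; rfl
      rw [← e1, ← e2]; exact hww
  -- surjectivity: construction of preimages in the kernels
  have hex : ∀ (m n : ℤ), m ≤ n → ∀ v : X, P 0 n v = 0 →
      ∃ w : X, P 0 m w = 0 ∧ calA A n m w = v := by
    intro m
    refine Int.le_induction ?_ ?_
    · intro v hv; exact ⟨v, hv, by rw [calA_self]; rfl⟩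
    · intro n hn ih v hv
      have hvmem : v ∈ (LinearMap.ker (P 0 (n + 1) : X →ₗ[ℝ] X) : Set X) := by
        simpa [LinearMap.mem_ker] using hv
      obtain ⟨v', hv'mem, hv'⟩ := (h5 n).surjOn hvmem
      obtain ⟨w, hw, hcw⟩ := ih v' (by simpa [LinearMap.mem_ker] using hv'mem)
      exact ⟨w, hw, by rw [calA_succ A hn, ContinuousLinearMap.comp_apply, hcw, hv']⟩
  -- the Green function operators B m n = 𝒜(m,n) P¹_n for m ≤ n
  have hexB : ∀ (m n : ℤ) (x : X), ∃ w : X, m ≤ n →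
      P 0 m w = 0 ∧ calA A n m w = P 1 n x := by
    intro m n x
    by_cases hmn : m ≤ n
    · have hP01 : P 0 n (P 1 n x) = 0 := by
        have h30 := h3 0 1 n (by decide)
        calc P 0 n (P 1 n x) = ((P 0 n).comp (P 1 n)) x := rfl
          _ = 0 := by rw [h30]; rfl
      obtain ⟨w, hw1, hw2⟩ := hex m n hmn (P 1 n x) hP01
      exact ⟨w, fun _ => ⟨hw1, hw2⟩⟩
    · exact ⟨0, fun hc' => absurd hc' hmn⟩
  choose B hB using hexB
  have hBker : ∀ (m n : ℤ) (x : X), m ≤ n → P 0 m (B m n x) = 0 :=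
    fun m n x hmn => (hB m n x hmn).1
  have hBcal : ∀ (m n : ℤ) (x : X), m ≤ n → calA A n m (B m n x) = P 1 n x :=
    fun m n x hmn => (hB m n x hmn).2
  have hBnorm : ∀ (m n : ℤ) (x : X), m ≤ n →
      ‖B m n x‖ ≤ C * Real.exp (-lam * (n - m)) * ‖x‖ := by
    intro m n x hmn
    exact h7 m n hmn x (B m n x)
      (by simpa [LinearMap.mem_ker] using hBker m n x hmn) (hBcal m n x hmn)
  have hBself : ∀ (n : ℤ) (x : X), B n n x = P 1 n x := by
    intro n x
    have := hBcal n n x le_rfl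
    rwa [calA_self] at this
  have hBshift : ∀ (m n : ℤ) (x : X), m + 1 ≤ n → A m (B m n x) = B (m + 1) n x := by
    intro m n x hmn
    have hm : m ≤ n := by omega
    refine hinj (m + 1) n hmn _ _ ?_ (hBker (m + 1) n x hmn) ?_
    · have hmemB : B m n x ∈ (LinearMap.ker (P 0 m : X →ₗ[ℝ] X) : Set X) := by
        simpa [LinearMap.mem_ker] using hBker m n x hm
      have := (h5 m).mapsTo hmemB
      simpa [LinearMap.mem_ker] using this
    · have hc1 : calA A n m = (calA A n (m + 1)).comp (calA A (m + 1) m) :=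
        calA_comp A (by omega) n hmn
      calc calA A n (m + 1) (A m (B m n x))
          = calA A n (m + 1) (calA A (m + 1) m (B m n x)) := by rw [calA_one]
        _ = calA A n m (B m n x) := by rw [hc1]; rfl
        _ = P 1 n x := hBcal m n x hm
        _ = calA A n (m + 1) (B (m + 1) n x) := (hBcal (m + 1) n x hmn).symm
  have hBsub : ∀ (m n : ℤ) (x x' : X), m ≤ n →
      B m n x - B m n x' = B m n (x - x') := by
    intro m n x x' hmn
    refine hinj m n hmn _ _ ?_ (hBker m n _ hmn) ?_
    · rw [map_sub, hBker m n x hmn, hBker m n x' hmn, sub_zero]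
    · rw [map_sub, hBcal m n x hmn, hBcal m n x' hmn, hBcal m n _ hmn, ← map_sub]
  -- per-term exponent simplifications
  have hexp1 : ∀ (n : ℤ) (j : ℕ), Real.exp (-lam * ((n : ℝ) - ((n - (j : ℤ) : ℤ) : ℝ))) = q ^ j := by
    intro n j
    have : -lam * ((n : ℝ) - ((n - (j : ℤ) : ℤ) : ℝ)) = (j : ℕ) * (-lam) := by
      push_cast; ring
    rw [this, Real.exp_nat_mul]
  have hterm1 : ∀ (n : ℤ) (j : ℕ) (v : X),
      ‖calA A n (n - j) ((P 0 (n - j)) v + (P 2 (n - j)) v)‖ ≤ 2 * C * q ^ j * ‖v‖ := by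
    intro n j v
    have hj : (n : ℤ) - j ≤ n := by omega
    have e1 := (h6 n (n - j) hj).trans_eq (by rw [hexp1 n j])
    have e2 := (h8 n (n - j) hj).trans_eq (by rw [hexp1 n j])
    calc ‖calA A n (n - j) ((P 0 (n - j)) v + (P 2 (n - j)) v)‖
        = ‖((calA A n (n - j)).comp (P 0 (n - j))) v + ((calA A n (n - j)).comp (P 2 (n - j))) v‖ := by
          rw [map_add]; rfl
      _ ≤ ‖((calA A n (n - j)).comp (P 0 (n - j))) v‖ + ‖((calA A n (n - j)).comp (P 2 (n - j))) v‖ :=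
          norm_add_le _ _
      _ ≤ C * q ^ j * ‖v‖ + C * q ^ j * ‖v‖ := by
          gcongr
          · exact ContinuousLinearMap.le_of_opNorm_le _ e1 v
          · exact ContinuousLinearMap.le_of_opNorm_le _ e2 v
      _ = 2 * C * q ^ j * ‖v‖ := by ring
  have hterm2 : ∀ (n : ℤ) (j : ℕ) (v : X),
      ‖B n (n + 1 + j) v‖ ≤ C * q ^ (j + 1) * ‖v‖ := by
    intro n j v
    have hj : n ≤ n + 1 + j := by omega
    have := hBnorm n (n + 1 + j) v hj
    calc ‖B n (n + 1 + j) v‖ ≤ C * Real.exp (-lam * ((n + 1 + (j : ℤ) : ℤ) - (n : ℤ))) * ‖v‖ := by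
          exact_mod_cast this
      _ = C * q ^ (j + 1) * ‖v‖ := by
          push_cast
          have harg : -lam * ((n : ℝ) + 1 + (j : ℝ) - (n : ℝ)) = ((j + 1 : ℕ) : ℝ) * (-lam) := by
            push_cast; ring
          rw [harg, Real.exp_nat_mul]
  -- the Green operator
  set G : (ℤ → X) → ℤ → X := fun a n =>
    (∑' j : ℕ, calA A n (n - j) ((P 0 (n - j)) (a (n - j - 1)) + (P 2 (n - j)) (a (n - j - 1))))
      - ∑' j : ℕ, B n (n + 1 + j) (a (n + j)) with hGdef
  have hgeo : Summable (fun j : ℕ => q ^ j) := summable_geometric_of_lt_one hq0.le hq1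
  have hsum1 : ∀ (a : ℤ → X) (M : ℝ), (∀ k, ‖a k‖ ≤ M) → ∀ n : ℤ,
      Summable (fun j : ℕ =>
        calA A n (n - j) ((P 0 (n - j)) (a (n - j - 1)) + (P 2 (n - j)) (a (n - j - 1)))) := by
    intro a M ha n
    refine Summable.of_norm_bounded (g := fun j => 2 * C * M * q ^ j)
      ((hgeo.mul_left (2 * C)).mul_right M |>.congr (fun j => by ring)) ?_
    intro j
    calc ‖_‖ ≤ 2 * C * q ^ j * ‖a (n - j - 1)‖ := hterm1 n j _
      _ ≤ 2 * C * q ^ j * M := by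
          have := ha (n - j - 1)
          have h2 : (0:ℝ) ≤ 2 * C * q ^ j := by positivity
          nlinarith
      _ = 2 * C * M * q ^ j := by ring
  have hsum2 : ∀ (a : ℤ → X) (M : ℝ), (∀ k, ‖a k‖ ≤ M) → ∀ n : ℤ,
      Summable (fun j : ℕ => B n (n + 1 + j) (a (n + j))) := by
    intro a M ha n
    refine Summable.of_norm_bounded (g := fun j => C * q * M * q ^ j)
      ((hgeo.mul_left (C * q)).mul_right M |>.congr (fun j => by ring)) ?_
    intro j
    calc ‖_‖ ≤ C * q ^ (j + 1) * ‖a (n + j)‖ := hterm2 n j _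
      _ ≤ C * q ^ (j + 1) * M := by
          have := ha (n + j)
          have h2 : (0:ℝ) ≤ C * q ^ (j + 1) := by positivity
          nlinarith
      _ = C * q * M * q ^ j := by ring
  -- the constant L
  set L : ℝ := C * (2 + q) / (1 - q) with hLdef
  have hL0 : 0 < L := by
    apply div_pos
    · nlinarith
    · exact h1q
  have hGbound : ∀ (a : ℤ → X) (M : ℝ), (∀ k, ‖a k‖ ≤ M) → ∀ n : ℤ,
      ‖G a n‖ ≤ L * M := by
    intro a M ha n
    have hM0 : (0:ℝ) ≤ M := le_trans (norm_nonneg _) (ha 0)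
    have s1 := hsum1 a M ha n
    have s2 := hsum2 a M ha n
    have n1 : Summable (fun j : ℕ =>
        ‖calA A n (n - j) ((P 0 (n - j)) (a (n - j - 1)) + (P 2 (n - j)) (a (n - j - 1)))‖) := by
      refine Summable.of_nonneg_of_le (fun j => norm_nonneg _) (fun j => ?_)
        (((hgeo.mul_left (2 * C)).mul_right M).congr (fun j => by ring)
          : Summable (fun j : ℕ => 2 * C * M * q ^ j))
      calc ‖_‖ ≤ 2 * C * q ^ j * ‖a (n - j - 1)‖ := hterm1 n j _
        _ ≤ 2 * C * q ^ j * M := by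
            have := ha (n - j - 1)
            have h2 : (0:ℝ) ≤ 2 * C * q ^ j := by positivity
            nlinarith
        _ = 2 * C * M * q ^ j := by ring
    have n2 : Summable (fun j : ℕ => ‖B n (n + 1 + j) (a (n + j))‖) := by
      refine Summable.of_nonneg_of_le (fun j => norm_nonneg _) (fun j => ?_)
        (((hgeo.mul_left (C * q)).mul_right M).congr (fun j => by ring)
          : Summable (fun j : ℕ => C * q * M * q ^ j))
      calc ‖_‖ ≤ C * q ^ (j + 1) * ‖a (n + j)‖ := hterm2 n j _
        _ ≤ C * q ^ (j + 1) * M := by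
            have := ha (n + j)
            have h2 : (0:ℝ) ≤ C * q ^ (j + 1) := by positivity
            nlinarith
        _ = C * q * M * q ^ j := by ring
    have e1 : (∑' j : ℕ, (2 * C * M * q ^ j)) = 2 * C * M * (1 - q)⁻¹ := by
      rw [tsum_mul_left, tsum_geometric_of_lt_one hq0.le hq1]
    have e2 : (∑' j : ℕ, (C * q * M * q ^ j)) = C * q * M * (1 - q)⁻¹ := by
      rw [tsum_mul_left, tsum_geometric_of_lt_one hq0.le hq1]
    have b1 : ‖∑' j : ℕ,
        calA A n (n - j) ((P 0 (n - j)) (a (n - j - 1)) + (P 2 (n - j)) (a (n - j - 1)))‖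
        ≤ 2 * C * M * (1 - q)⁻¹ := by
      refine le_trans (norm_tsum_le_tsum_norm n1) ?_
      rw [← e1]
      refine Summable.tsum_le_tsum (fun j => ?_) n1
        (((hgeo.mul_left (2 * C)).mul_right M).congr (fun j => by ring))
      calc ‖_‖ ≤ 2 * C * q ^ j * ‖a (n - j - 1)‖ := hterm1 n j _
        _ ≤ 2 * C * q ^ j * M := by
            have := ha (n - j - 1)
            have h2 : (0:ℝ) ≤ 2 * C * q ^ j := by positivity
            nlinarith
        _ = 2 * C * M * q ^ j := by ring
    have b2 : ‖∑' j : ℕ, B n (n + 1 + j) (a (n + j))‖ ≤ C * q * M * (1 - q)⁻¹ := by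
      refine le_trans (norm_tsum_le_tsum_norm n2) ?_
      rw [← e2]
      refine Summable.tsum_le_tsum (fun j => ?_) n2
        (((hgeo.mul_left (C * q)).mul_right M).congr (fun j => by ring))
      calc ‖_‖ ≤ C * q ^ (j + 1) * ‖a (n + j)‖ := hterm2 n j _
        _ ≤ C * q ^ (j + 1) * M := by
            have := ha (n + j)
            have h2 : (0:ℝ) ≤ C * q ^ (j + 1) := by positivity
            nlinarith
        _ = C * q * M * q ^ j := by ring
    calc ‖G a n‖ ≤ ‖∑' j : ℕ,
          calA A n (n - j) ((P 0 (n - j)) (a (n - j - 1)) + (P 2 (n - j)) (a (n - j - 1)))‖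
          + ‖∑' j : ℕ, B n (n + 1 + j) (a (n + j))‖ := by
          rw [hGdef]; exact norm_sub_le _ _
      _ ≤ 2 * C * M * (1 - q)⁻¹ + C * q * M * (1 - q)⁻¹ := add_le_add b1 b2
      _ = L * M := by
          rw [hLdef]; field_simp
  -- the fundamental recurrence of the Green operator
  have hGrec : ∀ (a : ℤ → X) (M : ℝ), (∀ k, ‖a k‖ ≤ M) → ∀ n : ℤ,
      G a (n + 1) = A n (G a n) + a n := by
    intro a M ha n
    set t1 : ℕ → X := fun j => calA A n (n - j)
      ((P 0 (n - j)) (a (n - j - 1)) + (P 2 (n - j)) (a (n - j - 1))) with ht1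
    set u : ℕ → X := fun j => calA A (n + 1) (n + 1 - j)
      ((P 0 (n + 1 - j)) (a (n + 1 - j - 1)) + (P 2 (n + 1 - j)) (a (n + 1 - j - 1))) with hu
    set w : ℕ → X := fun j => B n (n + 1 + j) (a (n + j)) with hw
    set w' : ℕ → X := fun j => B (n + 1) (n + 1 + j) (a (n + j)) with hw'
    have st1 : Summable t1 := hsum1 a M ha n
    have su : Summable u := hsum1 a M ha (n + 1)
    have sw : Summable w := hsum2 a M ha n
    have hww' : ∀ j : ℕ, A n (w j) = w' j := by
      intro j
      exact hBshift n (n + 1 + j) (a (n + j)) (by omega)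
    have sw' : Summable w' := (sw.map (A n) (A n).continuous).congr hww'
    have hu1 : ∀ j : ℕ, A n (t1 j) = u (j + 1) := by
      intro j
      simp only [ht1, hu, Nat.cast_add, Nat.cast_one]
      have e : n + 1 - ((j : ℤ) + 1) = n - (j : ℤ) := by ring
      rw [e, calA_succ A (show n - (j : ℤ) ≤ n by omega)]
      rfl
    have hvw' : ∀ j : ℕ, B (n + 1) (n + 1 + 1 + j) (a (n + 1 + j)) = w' (j + 1) := by
      intro j
      simp only [hw', Nat.cast_add, Nat.cast_one]
      congr 1 <;> ring_nf
    have hw'0 : w' 0 = P 1 (n + 1) (a n) := by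
      simp only [hw', Nat.cast_zero, add_zero]
      exact hBself (n + 1) (a n)
    have hu0 : u 0 = (P 0 (n + 1)) (a n) + (P 2 (n + 1)) (a n) := by
      simp only [hu, Nat.cast_zero, sub_zero, add_sub_cancel_right, calA_self]
      rfl
    have key : u 0 + w' 0 = a n := by
      have hxx := ContinuousLinearMap.ext_iff.mp (h1 (n + 1)) (a n)
      simp only [ContinuousLinearMap.add_apply, ContinuousLinearMap.id_apply] at hxx
      rw [hu0, hw'0]
      calc (P 0 (n + 1)) (a n) + (P 2 (n + 1)) (a n) + (P 1 (n + 1)) (a n)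
          = (P 0 (n + 1)) (a n) + (P 1 (n + 1)) (a n) + (P 2 (n + 1)) (a n) := by abel
        _ = a n := hxx
    have EA : A n (G a n) = (∑' j : ℕ, u (j + 1)) - ∑' j : ℕ, w' j := by
      simp only [hGdef]
      rw [map_sub, ContinuousLinearMap.map_tsum (A n) st1,
        ContinuousLinearMap.map_tsum (A n) sw]
      rw [tsum_congr hu1, tsum_congr hww']
    have EG : G a (n + 1) = (u 0 + ∑' j : ℕ, u (j + 1)) - ∑' j : ℕ, w' (j + 1) := by
      simp only [hGdef]
      rw [tsum_congr hvw']
      congr 1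
      exact Summable.tsum_eq_zero_add su
    have hsplit : ∑' j : ℕ, w' j = w' 0 + ∑' j : ℕ, w' (j + 1) := Summable.tsum_eq_zero_add sw'
    rw [EG, EA, hsplit, ← key]
    abel
  -- difference bound for the Green operator
  have hGdiff : ∀ (a b : ℤ → X) (Ma Mb M : ℝ), (∀ k, ‖a k‖ ≤ Ma) → (∀ k, ‖b k‖ ≤ Mb) →
      (∀ k, ‖a k - b k‖ ≤ M) → ∀ n : ℤ, ‖G a n - G b n‖ ≤ L * M := by
    intro a b Ma Mb M hMa hMb hab n
    have hGsub : G a n - G b n = G (fun k => a k - b k) n := by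
      simp only [hGdef]
      have e1 : (∑' j : ℕ, calA A n (n - j)
            ((P 0 (n - j)) (a (n - j - 1)) + (P 2 (n - j)) (a (n - j - 1))))
          - (∑' j : ℕ, calA A n (n - j)
            ((P 0 (n - j)) (b (n - j - 1)) + (P 2 (n - j)) (b (n - j - 1))))
          = ∑' j : ℕ, calA A n (n - j)
            ((P 0 (n - j)) (a (n - j - 1) - b (n - j - 1))
              + (P 2 (n - j)) (a (n - j - 1) - b (n - j - 1))) := by
        rw [← Summable.tsum_sub (hsum1 a Ma hMa n) (hsum1 b Mb hMb n)]
        refine tsum_congr fun j => ?_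
        rw [← map_sub]
        congr 1
        simp only [map_sub]
        abel
      have e2 : (∑' j : ℕ, B n (n + 1 + j) (a (n + j)))
          - (∑' j : ℕ, B n (n + 1 + j) (b (n + j)))
          = ∑' j : ℕ, B n (n + 1 + j) (a (n + j) - b (n + j)) := by
        rw [← Summable.tsum_sub (hsum2 a Ma hMa n) (hsum2 b Mb hMb n)]
        exact tsum_congr fun j => hBsub n (n + 1 + j) _ _ (by omega)
      rw [← e1, ← e2]
      abel
    rw [hGsub]
    exact hGbound _ M hab n
  -- the contraction constant
  have hcL : c * L < 1 := by
    have hden : (0:ℝ) < 2 * C * (1 + q) := by positivity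
    have h' : c * (2 * C * (1 + q)) < 1 - q := (lt_div_iff₀ hden).mp hcsmall
    have hform : c * L = c * (C * (2 + q)) / (1 - q) := by rw [hLdef]; ring
    rw [hform, div_lt_iff₀ h1q, one_mul]
    nlinarith [hq0, hc, hC]
  have h1cL : (0:ℝ) < 1 - c * L := by linarith
  have hKp : (0:ℝ) < L / (1 - c * L) := div_pos hL0 h1cL
  refine ⟨L / (1 - c * L), hKp, ?_⟩
  intro ε hε y hy
  -- the nonlinearity along the pseudo-orbit
  set g : (ℤ →ᵇ X) → ℤ → X := fun z k =>
    f k (y k + z k) - f k (y k) + (A k (y k) + f k (y k) - y (k + 1)) with hgdef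
  have hd : ∀ k : ℤ, ‖A k (y k) + f k (y k) - y (k + 1)‖ ≤ ε / (L / (1 - c * L)) := by
    intro k
    rw [norm_sub_rev]
    exact hy k
  have hgb : ∀ z : ℤ →ᵇ X, ∀ k : ℤ, ‖g z k‖ ≤ c * ‖z‖ + ε / (L / (1 - c * L)) := by
    intro z k
    refine (norm_add_le _ _).trans (add_le_add ?_ (hd k))
    have h' := hf k (y k + z k) (y k)
    rw [add_sub_cancel_left] at h'
    refine h'.trans ?_
    have := z.norm_coe_le_norm k
    nlinarith
  have hgdiff : ∀ z w : ℤ →ᵇ X, ∀ k : ℤ, ‖g z k - g w k‖ ≤ c * ‖z - w‖ := by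
    intro z w k
    have e : g z k - g w k = f k (y k + z k) - f k (y k + w k) := by
      simp only [hgdef]; abel
    rw [e]
    refine (hf k _ _).trans ?_
    have e2 : (y k + z k) - (y k + w k) = z k - w k := by abel
    rw [e2]
    have hzk : ‖z k - w k‖ ≤ ‖z - w‖ := by
      have := (z - w).norm_coe_le_norm k
      simpa using this
    nlinarith
  -- the fixed point map
  set T : (ℤ →ᵇ X) → (ℤ →ᵇ X) := fun z =>
    BoundedContinuousFunction.ofNormedAddCommGroupDiscrete (fun n => G (g z) n)
      (L * (c * ‖z‖ + ε / (L / (1 - c * L))))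
      (fun n => hGbound (g z) _ (hgb z) n) with hTdef
  have hTapp : ∀ (z : ℤ →ᵇ X) (n : ℤ), T z n = G (g z) n := by
    intro z n
    simp [hTdef]
  have hlip : LipschitzWith (Real.toNNReal (c * L)) T := by
    refine LipschitzWith.of_dist_le_mul fun z w => ?_
    have hnn : (0:ℝ) ≤ c * L := by positivity
    rw [Real.coe_toNNReal _ hnn]
    refine (BoundedContinuousFunction.dist_le
      (mul_nonneg hnn dist_nonneg)).mpr fun k => ?_
    calc dist (T z k) (T w k) = ‖G (g z) k - G (g w) k‖ := by
          rw [dist_eq_norm, hTapp z k, hTapp w k]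
      _ ≤ L * (c * dist z w) := by
          refine hGdiff (g z) (g w) _ _ (c * dist z w) (hgb z) (hgb w) (fun j => ?_) k
          rw [dist_eq_norm]
          exact hgdiff z w j
      _ = c * L * dist z w := by ring
  have hκ : Real.toNNReal (c * L) < 1 := by
    have hnn : (0:ℝ) ≤ c * L := by positivity
    have : ((Real.toNNReal (c * L) : ℝ≥0) : ℝ) < 1 := by
      rw [Real.coe_toNNReal _ hnn]
      exact hcL
    exact_mod_cast this
  have hcontr : ContractingWith (Real.toNNReal (c * L)) T := ⟨hκ, hlip⟩
  set z : ℤ →ᵇ X := ContractingWith.fixedPoint T hcontr with hzdef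
  have hz : T z = z := hcontr.fixedPoint_isFixedPt
  have hzapp : ∀ n : ℤ, z n = G (g z) n := by
    intro n
    conv_lhs => rw [← hz]
    exact hTapp z n
  refine ⟨fun n => y n + z n, ?_, ?_⟩
  · intro n
    have hrec := hGrec (g z) _ (hgb z) n
    have hz1 : z (n + 1) = A n (z n) + g z n := by
      rw [hzapp (n + 1), hzapp n]
      exact hrec
    show y (n + 1) + z (n + 1) = A n (y n + z n) + f n (y n + z n)
    rw [hz1, map_add]
    simp only [hgdef]
    abel
  · intro n
    have hzb : ‖z‖ ≤ ε := by
      have hb : ∀ k : ℤ, ‖z k‖ ≤ L * (c * ‖z‖ + ε / (L / (1 - c * L))) := by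
        intro k
        rw [hzapp k]
        exact hGbound (g z) _ (hgb z) k
      have hnz : ‖z‖ ≤ L * (c * ‖z‖ + ε / (L / (1 - c * L))) :=
        (BoundedContinuousFunction.norm_le (mul_nonneg hL0.le
          (add_nonneg (by positivity) (le_of_lt (div_pos hε hKp))))).mpr hb
      have heq : ε / (L / (1 - c * L)) = ε * (1 - c * L) / L := div_div_eq_mul_div ε L (1 - c * L)
      rw [heq] at hnz
      have hL' : L ≠ 0 := ne_of_gt hL0
      have hcollect : L * (c * ‖z‖ + ε * (1 - c * L) / L) = L * c * ‖z‖ + ε * (1 - c * L) := by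
        field_simp
      rw [hcollect] at hnz
      nlinarith [norm_nonneg z]
    have hzn := z.norm_coe_le_norm n
    show ‖(y n + z n) - y n‖ ≤ ε
    rw [add_sub_cancel_left]
    linarith
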